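/- arXiv:2207.13231 — 2 statements merged into one kernel-verified Lean document; each statement's English description precedes it below -/
import Mathlib

section
/- Let H be a finite-dimensional complex inner product space, A a self-adjoint linear operator on H, and U a unitary operator on H. Suppose that for every eigenvalue a of A, with Π_a the orthogonal projection onto the eigenspace of A for a, and for every vector ψ ∈ H, one has ⟨ψ, Π_a ψ⟩ = ⟨Uψ, Π_a Uψ⟩. Then A commutes with U, i.e. AU = UA. -/
/-- If `A` is a self-adjoint operator on a finite-dimensional complex
inner product space and `U` is unitary, and for every eigenvalue `a` of `A` the
outcome probability `⟨ψ, Π_a ψ⟩` (with `Π_a` the orthogonal projection onto the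
eigenspace for `a`) is unchanged when every state `ψ` is replaced by `U ψ`,
then `A` commutes with `U`. -/
theorem stmt_1 {H : Type*} [NormedAddCommGroup H] [InnerProductSpace ℂ H]
    [FiniteDimensional ℂ H] (A : H →ₗ[ℂ] H) (hA : A.IsSymmetric)
    (U : H ≃ₗᵢ[ℂ] H)
    (hprob : ∀ a : ℂ, Module.End.HasEigenvalue A a → ∀ ψ : H,
      (inner ℂ ψ (↑(Submodule.orthogonalProjectionOnto (Module.End.eigenspace A a) ψ)) : ℂ)
        = inner ℂ (U ψ) (↑(Submodule.orthogonalProjectionOnto (Module.End.eigenspace A a) (U ψ)))) :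
    ∀ x : H, A (U x) = U (A x) := by
  -- U maps each eigenspace into itself
  have key : ∀ a : ℂ, ∀ x ∈ Module.End.eigenspace A a,
      U x ∈ Module.End.eigenspace A a := by
    intro a x hx
    by_cases ha : Module.End.HasEigenvalue A a
    · set E := Module.End.eigenspace A a with hE
      have h1 : (E.orthogonalProjectionOnto x : H) = x :=
        Submodule.starProjection_eq_self_iff.2 hx
      have h2 := hprob a ha x
      rw [h1] at h2
      -- RHS: ⟨Uψ, P Uψ⟩ = ‖P Uψ‖²
      set v := U x with hv
      set p : H := ↑(E.orthogonalProjectionOnto v) with hp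
      have horth : (inner ℂ (v - p) p : ℂ) = 0 :=
        Submodule.starProjection_inner_eq_zero v p (E.orthogonalProjectionOnto v).2
      have h3 : (inner ℂ v p : ℂ) = inner ℂ p p := by
        rw [← sub_eq_zero, ← inner_sub_left]; exact horth
      rw [h3] at h2
      -- ⟨x,x⟩ = ⟨p,p⟩, and ‖v‖ = ‖x‖
      have hxv : ‖v‖ = ‖x‖ := U.norm_map x
      have hsq : ‖x‖^2 = ‖p‖^2 := by
        rw [inner_self_eq_norm_sq_to_K x, inner_self_eq_norm_sq_to_K p] at h2
        exact_mod_cast h2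
      have hnorm : ‖p‖ = ‖v‖ := by
        rw [hxv]
        nlinarith [norm_nonneg p, norm_nonneg x]
      have hpyth := norm_add_sq_eq_norm_sq_add_norm_sq_of_inner_eq_zero (v - p) p horth
      rw [sub_add_cancel] at hpyth
      have hvp : v - p = 0 := by
        have : ‖v - p‖^2 = 0 := by rw [hnorm] at hpyth; nlinarith
        have := pow_eq_zero_iff (n := 2) (by norm_num) |>.mp this
        exact norm_eq_zero.mp this
      have hpv : p = v := by rw [← sub_eq_zero]; rw [← neg_sub v p, hvp, neg_zero]
      have := (E.orthogonalProjectionOnto v).2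
      rw [hp] at hpv
      rw [← hpv]
      exact this
    · have hbot : Module.End.eigenspace A a = ⊥ := by
        by_contra hne
        exact ha (Module.End.hasEigenvalue_iff.mpr (by
          rwa [Module.End.eigenspace] at hne))
      rw [hbot] at hx ⊢
      simp only [Submodule.mem_bot] at hx
      simp [hx]
  -- decompose via eigenspaces
  intro x
  have htop : (⨆ a : ℂ, Module.End.eigenspace A a) = ⊤ := by
    have := hA.orthogonalComplement_iSup_eigenspaces_eq_bot
    rwa [Submodule.orthogonal_eq_bot_iff] at this
  let S : Submodule ℂ H :=
    { carrier := {x | A (U x) = U (A x)}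
      add_mem' := by intro a b ha hb; simp only [Set.mem_setOf_eq, map_add] at *; rw [ha, hb]
      zero_mem' := by simp
      smul_mem' := by intro c a ha; simp only [Set.mem_setOf_eq, map_smul] at *; rw [ha] }
  have hS : ∀ a : ℂ, Module.End.eigenspace A a ≤ S := by
    intro a y hy
    have hUy := key a y hy
    have h1 : A (U y) = a • (U y) := by
      rw [Module.End.mem_eigenspace_iff] at hUy; exact hUy
    have h2 : A y = a • y := by
      rw [Module.End.mem_eigenspace_iff] at hy; exact hy
    show A (U y) = U (A y)
    rw [h1, h2, map_smul]
  have : (⊤ : Submodule ℂ H) ≤ S := htop ▸ iSup_le hS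
  exact this (Submodule.mem_top)
end

section
/- Let G be a finite group, ρ a unitary representation of G on a finite-dimensional complex inner product space H, and E ⊆ H an irreducible G-invariant subspace. Let ϱ be a positive semidefinite operator on H with Tr ϱ = 1, whose range is contained in E, and which commutes with ρ(g) for all g ∈ G. Then ϱ = (1/dim E) Π_E, where Π_E is the orthogonal projection onto E. -/
/-- A subspace `W` is invariant under the unitary representation `ρ` of `G` if
`ρ g` maps `W` into itself for every `g`. -/
def IsInvariantSubspace {H : Type*} [NormedAddCommGroup H] [InnerProductSpace ℂ H]
    {G : Type*} [Group G] (ρ : G →* (H ≃ₗᵢ[ℂ] H)) (W : Submodule ℂ H) : Prop :=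
  ∀ g : G, ∀ x ∈ W, ρ g x ∈ W

/-- An invariant subspace `W` is irreducible if it is nonzero and contains no invariant
subspace other than `⊥` and `W` itself. -/
def IsIrreducibleSubspace {H : Type*} [NormedAddCommGroup H] [InnerProductSpace ℂ H]
    {G : Type*} [Group G] (ρ : G →* (H ≃ₗᵢ[ℂ] H)) (W : Submodule ℂ H) : Prop :=
  W ≠ ⊥ ∧ ∀ U : Submodule ℂ H, U ≤ W → IsInvariantSubspace ρ U → U = ⊥ ∨ U = W

/-- maximal state preparation: If `ϱ` is a density operator (positive
semidefinite, trace one) on a finite-dimensional complex inner product space whose range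
is contained in an irreducible invariant subspace `E` for a unitary representation of a
finite group `G`, and `ϱ` commutes with all `ρ g`, then `ϱ = (1/dim E) Π_E`, with
`Π_E` the orthogonal projection onto `E`. -/
theorem stmt_11 {G : Type*} [Group G] [Fintype G]
    {H : Type*} [NormedAddCommGroup H] [InnerProductSpace ℂ H] [FiniteDimensional ℂ H]
    (ρ : G →* (H ≃ₗᵢ[ℂ] H)) (E : Submodule ℂ H)
    (hEinv : IsInvariantSubspace ρ E) (hEirr : IsIrreducibleSubspace ρ E)
    (ϱ : H →ₗ[ℂ] H) (hsymm : ϱ.IsSymmetric)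
    (hpos : ∀ x : H, 0 ≤ (inner ℂ x (ϱ x) : ℂ).re)
    (htr : LinearMap.trace ℂ H ϱ = 1)
    (hrange : LinearMap.range ϱ ≤ E)
    (hcomm : ∀ (g : G) (x : H), ϱ (ρ g x) = ρ g (ϱ x)) :
    ϱ = (Module.finrank ℂ E : ℂ)⁻¹ •
      (E.subtype ∘ₗ (E.orthogonalProjectionOnto).toLinearMap) := by
  classical
  have hmap : ∀ x ∈ E, ϱ x ∈ E := fun x _ => hrange ⟨x, rfl⟩
  -- restriction of ϱ to E
  set f : E →ₗ[ℂ] E := ϱ.restrict hmap with hf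
  have : Nontrivial E := Submodule.nontrivial_iff_ne_bot.mpr hEirr.1
  obtain ⟨μ, hμ⟩ := Module.End.exists_eigenvalue f
  obtain ⟨v, hv⟩ := hμ.exists_hasEigenvector
  -- the eigenspace, as a subspace of H
  set U : Submodule ℂ H := (Module.End.eigenspace f μ).map E.subtype with hU
  have hUle : U ≤ E := by
    rintro x ⟨y, _, rfl⟩; exact y.2
  have hUinv : IsInvariantSubspace ρ U := by
    rintro g x ⟨y, hy, rfl⟩
    refine ⟨⟨ρ g (y : H), hEinv g y y.2⟩, ?_, rfl⟩
    simp only [SetLike.mem_coe, Module.End.mem_eigenspace_iff] at hy ⊢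
    have hy' : ϱ (y : H) = μ • (y : H) := congrArg Subtype.val hy
    apply Subtype.ext
    show ϱ (ρ g (y : H)) = μ • ρ g (y : H)
    rw [hcomm, hy', map_smul]
  have hUne : U ≠ ⊥ := by
    intro h
    have : (v : H) ∈ U := ⟨v, hv.1, rfl⟩
    rw [h, Submodule.mem_bot] at this
    exact hv.2 (by simpa using Subtype.ext this)
  have hUE : U = E := (hEirr.2 U hUle hUinv).resolve_left hUne
  -- ϱ is scalar μ on E
  have hscal : ∀ x ∈ E, ϱ x = μ • x := by
    intro x hx
    rw [← hUE] at hx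
    obtain ⟨y, hy, rfl⟩ := hx
    exact congrArg Subtype.val (Module.End.mem_eigenspace_iff.mp hy)
  -- ϱ vanishes on E^⊥
  have hperp : ∀ x ∈ Eᗮ, ϱ x = 0 := by
    intro x hx
    have h0 : (inner ℂ (ϱ x) (ϱ x) : ℂ) = 0 := by
      rw [hsymm x (ϱ x)]
      have hm : ϱ (ϱ x) ∈ E := hrange ⟨ϱ x, rfl⟩
      rw [← inner_conj_symm, (Submodule.mem_orthogonal E x).mp hx _ hm, map_zero]
    exact inner_self_eq_zero.mp h0
  -- ϱ = μ • P
  set P : H →ₗ[ℂ] H := E.subtype ∘ₗ (E.orthogonalProjectionOnto).toLinearMap with hPdef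
  have hP : ϱ = μ • P := by
    ext x
    have hxd : x = (↑(E.orthogonalProjectionOnto x) : H) + (x - ↑(E.orthogonalProjectionOnto x)) := by
      abel
    have hmem : x - ↑(E.orthogonalProjectionOnto x) ∈ Eᗮ :=
      Submodule.sub_starProjection_mem_orthogonal x
    calc ϱ x = ϱ (↑(E.orthogonalProjectionOnto x)) + ϱ (x - ↑(E.orthogonalProjectionOnto x)) := by
          rw [← map_add]; exact congrArg ϱ hxd
      _ = μ • (↑(E.orthogonalProjectionOnto x) : H) := by
          rw [hscal _ (E.orthogonalProjectionOnto x).2, hperp _ hmem, add_zero]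
      _ = (μ • P) x := rfl
  -- trace of P is finrank E
  have hPtr : LinearMap.trace ℂ H P = (Module.finrank ℂ E : ℂ) := by
    rw [hPdef, LinearMap.trace_comp_comm']
    have : (E.orthogonalProjectionOnto).toLinearMap ∘ₗ E.subtype = LinearMap.id := by
      ext y
      exact congrArg Subtype.val (Submodule.orthogonalProjectionOnto_mem_subspace_eq_self y)
    rw [this, LinearMap.trace_id]
  have hrk : (Module.finrank ℂ E : ℂ) ≠ 0 := by
    have : Module.finrank ℂ E ≠ 0 := by
      simpa [Submodule.finrank_eq_zero] using hEirr.1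
    exact_mod_cast this
  have hμval : μ = (Module.finrank ℂ E : ℂ)⁻¹ := by
    have : μ * (Module.finrank ℂ E : ℂ) = 1 := by
      rw [← hPtr]
      calc μ * LinearMap.trace ℂ H P = LinearMap.trace ℂ H (μ • P) := by
            rw [map_smul, smul_eq_mul]
        _ = 1 := by rw [← hP, htr]
    field_simp at this ⊢
    linear_combination this
  rw [hP, hμval]
end
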